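/- Suppose hypothesis H(7,6) holds: every odd integer N ≥ 7 can be written as N = q₁ + q₂ + q₃ with q₁, q₂, q₃ prime and |N/3 − qᵢ| ≤ N/6 for i = 1,2,3. Then for every prime p, the largest atom u of the additive submonoid of ℕ generated by all primes ≥ p satisfies u < 6p. -/

import Mathlib

open Real

/-- The additive submonoid of ℕ generated by all primes `q ≥ p`. -/
def Sgen (p : ℕ) : AddSubmonoid ℕ := AddSubmonoid.closure {q : ℕ | q.Prime ∧ p ≤ q}

/-- `a` is an atom of `Sgen p`: nonzero, in `Sgen p`, and not a sum of two nonzero elements. -/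
def IsAtomOf (p a : ℕ) : Prop :=
  a ∈ Sgen p ∧ a ≠ 0 ∧
    ¬ ∃ b c : ℕ, b ∈ Sgen p ∧ c ∈ Sgen p ∧ b ≠ 0 ∧ c ≠ 0 ∧ a = b + c

lemma Sgen_cases (p a : ℕ) (ha : a ∈ Sgen p) :
    a = 0 ∨ (a.Prime ∧ p ≤ a) ∨
      ∃ b c : ℕ, b ∈ Sgen p ∧ c ∈ Sgen p ∧ b ≠ 0 ∧ c ≠ 0 ∧ a = b + c := by
  induction ha using AddSubmonoid.closure_induction with
  | mem x hx => exact Or.inr (Or.inl hx)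
  | zero => exact Or.inl rfl
  | add x y hx hy ihx ihy =>
    rcases eq_or_ne x 0 with rfl | hx0
    · simpa using ihy
    rcases eq_or_ne y 0 with rfl | hy0
    · simpa using ihx
    · exact Or.inr (Or.inr ⟨x, y, hx, hy, hx0, hy0, rfl⟩)

lemma atom_prime {p a : ℕ} (h : IsAtomOf p a) : a.Prime ∧ p ≤ a := by
  obtain ⟨ha, ha0, hnd⟩ := h
  rcases Sgen_cases p a ha with rfl | h | h
  · exact absurd rfl ha0
  · exact h
  · exact absurd h hnd

theorem stmt11
    (H76 : ∀ N : ℕ, Odd N → 7 ≤ N →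
      ∃ q₁ q₂ q₃ : ℕ, q₁.Prime ∧ q₂.Prime ∧ q₃.Prime ∧ N = q₁ + q₂ + q₃ ∧
        |(N : ℚ) / 3 - q₁| ≤ (N : ℚ) / 6 ∧ |(N : ℚ) / 3 - q₂| ≤ (N : ℚ) / 6 ∧
        |(N : ℚ) / 3 - q₃| ≤ (N : ℚ) / 6) :
    ∀ p : ℕ, p.Prime → ∀ u : ℕ, IsGreatest {a : ℕ | IsAtomOf p a} u →
      u < 6 * p := by
  intro p hp u hu
  by_contra hle
  push_neg at hle
  obtain ⟨hatom, _⟩ := hu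
  obtain ⟨hSu, hu0, hnd⟩ := hatom
  have huP : u.Prime := (atom_prime ⟨hSu, hu0, hnd⟩).1
  have hp2 : 2 ≤ p := hp.two_le
  have h12 : 12 ≤ u := le_trans (by omega) hle
  have hodd : Odd u := huP.odd_of_ne_two (by omega)
  obtain ⟨q₁, q₂, q₃, hq₁, hq₂, hq₃, hsum, h1, h2, h3⟩ := H76 u hodd (by omega)
  have key : ∀ q : ℕ, q.Prime → |(u : ℚ) / 3 - q| ≤ (u : ℚ) / 6 → q ∈ Sgen p := by
    intro q hq habs
    have h6p : (6 * p : ℚ) ≤ (u : ℚ) := by exact_mod_cast hle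
    have h' : ((u : ℚ) / 3 - q) ≤ (u : ℚ) / 6 := (abs_le.mp habs).2
    have hpq : (p : ℚ) ≤ (q : ℚ) := by linarith
    exact AddSubmonoid.subset_closure ⟨hq, by exact_mod_cast hpq⟩
  have m1 := key q₁ hq₁ h1
  have m2 := key q₂ hq₂ h2
  have m3 := key q₃ hq₃ h3
  exact hnd ⟨q₁, q₂ + q₃, m1, AddSubmonoid.add_mem _ m2 m3, hq₁.pos.ne',
    by have := hq₂.pos; omega, by omega⟩
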